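/- arXiv:1708.01799 — 2 statements merged into one kernel-verified Lean document; each statement's English description precedes it below -/
import Mathlib

section
/- Under the same setup, if Δ_I ≤ v then for any two subintervals I_1, I_2 ⊆ I and any π ∈ Π, the regrets Reg_{I'}(π) = max_{π'∈Π} R_{I'}(π') − R_{I'}(π) satisfy |Reg_{I_1}(π) − Reg_{I_2}(π)| ≤ 2v. -/
/-- Telescoping bound. -/
lemma telescope_abs (f : ℕ → ℝ) (a b : ℕ) (hab : a ≤ b) :
    |f b - f a| ≤ ∑ τ ∈ Finset.Icc (a+1) b, |f τ - f (τ-1)| := by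
  induction b, hab using Nat.le_induction with
  | base => simp
  | succ n hn ih =>
    rw [Finset.sum_Icc_succ_top (by omega : a + 1 ≤ n + 1)]
    have : f (n+1) - f a = (f (n+1) - f n) + (f n - f a) := by ring
    rw [this]
    calc |(f (n+1) - f n) + (f n - f a)| ≤ |f (n+1) - f n| + |f n - f a| := abs_add_le _ _
      _ ≤ |f (n+1) - f n| + ∑ τ ∈ Finset.Icc (a+1) n, |f τ - f (τ-1)| := by linarith
      _ = ∑ τ ∈ Finset.Icc (a+1) n, |f τ - f (τ-1)| + |f (n+1) - f (n+1-1)| := by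
          simp [add_comm]
      _ = _ := by norm_num

lemma mean_abs_le {I₁ I₂ : Finset ℕ} (h₁ : I₁.Nonempty) (h₂ : I₂.Nonempty)
    (f : ℕ → ℝ) (v : ℝ) (hv : ∀ a ∈ I₁, ∀ b ∈ I₂, |f a - f b| ≤ v) :
    |(∑ t ∈ I₁, f t) / (I₁.card : ℝ) - (∑ t ∈ I₂, f t) / (I₂.card : ℝ)| ≤ v := by
  have n₁pos : (0:ℝ) < I₁.card := by exact_mod_cast Finset.card_pos.mpr h₁
  have n₂pos : (0:ℝ) < I₂.card := by exact_mod_cast Finset.card_pos.mpr h₂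
  have key : |(I₂.card : ℝ) * (∑ t ∈ I₁, f t) - (I₁.card : ℝ) * (∑ t ∈ I₂, f t)|
      ≤ (I₁.card : ℝ) * (I₂.card : ℝ) * v := by
    have hrw : (I₂.card : ℝ) * (∑ t ∈ I₁, f t) - (I₁.card : ℝ) * (∑ t ∈ I₂, f t)
        = ∑ a ∈ I₁, ∑ b ∈ I₂, (f a - f b) := by
      rw [eq_comm]
      simp only [Finset.sum_sub_distrib, Finset.sum_const, nsmul_eq_mul, ← Finset.mul_sum]
    rw [hrw]
    calc |∑ a ∈ I₁, ∑ b ∈ I₂, (f a - f b)| ≤ ∑ a ∈ I₁, |∑ b ∈ I₂, (f a - f b)| :=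
          Finset.abs_sum_le_sum_abs _ _
      _ ≤ ∑ a ∈ I₁, ∑ b ∈ I₂, |f a - f b| := by
          refine Finset.sum_le_sum fun a _ => Finset.abs_sum_le_sum_abs _ _
      _ ≤ ∑ a ∈ I₁, ∑ b ∈ I₂, v := by
          refine Finset.sum_le_sum fun a ha => Finset.sum_le_sum fun b hb => hv a ha b hb
      _ = (I₁.card : ℝ) * (I₂.card : ℝ) * v := by simp [mul_assoc]
  have hdiff : (∑ t ∈ I₁, f t) / (I₁.card : ℝ) - (∑ t ∈ I₂, f t) / (I₂.card : ℝ)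
      = ((I₂.card : ℝ) * (∑ t ∈ I₁, f t) - (I₁.card : ℝ) * (∑ t ∈ I₂, f t))
        / ((I₁.card : ℝ) * (I₂.card : ℝ)) := by
    field_simp
  rw [hdiff, abs_div, abs_of_pos (mul_pos n₁pos n₂pos), div_le_iff₀ (mul_pos n₁pos n₂pos)]
  linarith [key]

lemma sup'_abs_sub_le {P : Type*} [Fintype P] [Nonempty P] (f g : P → ℝ) (v : ℝ)
    (h : ∀ x, |f x - g x| ≤ v) :
    |Finset.univ.sup' Finset.univ_nonempty f - Finset.univ.sup' Finset.univ_nonempty g| ≤ v := by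
  rw [abs_sub_le_iff]
  constructor <;> rw [sub_le_iff_le_add] <;> apply Finset.sup'_le <;> intro x _
  · have := abs_le.mp (h x)
    have hx : g x ≤ Finset.univ.sup' Finset.univ_nonempty g :=
      Finset.le_sup' _ (Finset.mem_univ x)
    linarith [hx, this.2]
  · have := abs_le.mp (h x)
    have hx : f x ≤ Finset.univ.sup' Finset.univ_nonempty f :=
      Finset.le_sup' _ (Finset.mem_univ x)
    linarith [hx, this.1]

/-- If the reward variation of `R` over `[s, e]` is at most `v`, then the regrets
`Reg_{I'}(π) = max_{π'} R_{I'}(π') - R_{I'}(π)` over any two subintervals of `[s, e]`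
differ by at most `2v`. -/
theorem regret_diff_le_two_variation
    {P : Type*} [Fintype P] [Nonempty P]
    (R : ℕ → P → ℝ) (hR : ∀ t π, R t π ∈ Set.Icc (0:ℝ) 1)
    (v : ℝ)
    (s e s₁ e₁ s₂ e₂ : ℕ)
    (h1l : s ≤ s₁) (h1 : s₁ ≤ e₁) (h1r : e₁ ≤ e)
    (h2l : s ≤ s₂) (h2 : s₂ ≤ e₂) (h2r : e₂ ≤ e)
    (hΔ : ∑ τ ∈ Finset.Icc (s+1) e,
        (Finset.univ.sup' Finset.univ_nonempty fun π => |R τ π - R (τ-1) π|) ≤ v)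
    (π : P) :
    |((Finset.univ.sup' Finset.univ_nonempty fun π' =>
          (∑ t ∈ Finset.Icc s₁ e₁, R t π') / ((Finset.Icc s₁ e₁).card : ℝ))
        - (∑ t ∈ Finset.Icc s₁ e₁, R t π) / ((Finset.Icc s₁ e₁).card : ℝ))
      - ((Finset.univ.sup' Finset.univ_nonempty fun π' =>
          (∑ t ∈ Finset.Icc s₂ e₂, R t π') / ((Finset.Icc s₂ e₂).card : ℝ))
        - (∑ t ∈ Finset.Icc s₂ e₂, R t π) / ((Finset.Icc s₂ e₂).card : ℝ))| ≤ 2 * v := by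
  -- nonnegativity of the sup terms
  have supnn : ∀ τ, 0 ≤ Finset.univ.sup' Finset.univ_nonempty fun π => |R τ π - R (τ-1) π| := by
    intro τ
    obtain ⟨x⟩ := ‹Nonempty P›
    exact le_trans (abs_nonneg (R τ x - R (τ-1) x)) (Finset.le_sup' (fun π => |R τ π - R (τ-1) π|) (Finset.mem_univ x))
  -- pointwise bound between any two timesteps in [s,e]
  have point : ∀ π' : P, ∀ a b : ℕ, s ≤ a → a ≤ e → s ≤ b → b ≤ e →
      |R a π' - R b π'| ≤ v := by
    intro π' a b hsa hae hsb hbe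
    wlog hab : b ≤ a generalizing a b
    · rw [abs_sub_comm]; exact this b a hsb hbe hsa hae (by omega)
    calc |R a π' - R b π'| ≤ ∑ τ ∈ Finset.Icc (b+1) a, |R τ π' - R (τ-1) π'| :=
          telescope_abs (fun t => R t π') b a hab
      _ ≤ ∑ τ ∈ Finset.Icc (b+1) a,
            (Finset.univ.sup' Finset.univ_nonempty fun π => |R τ π - R (τ-1) π|) := by
          refine Finset.sum_le_sum fun τ _ => Finset.le_sup' (fun π => |R τ π - R (τ-1) π|) (Finset.mem_univ π')
      _ ≤ ∑ τ ∈ Finset.Icc (s+1) e,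
            (Finset.univ.sup' Finset.univ_nonempty fun π => |R τ π - R (τ-1) π|) := by
          refine Finset.sum_le_sum_of_subset_of_nonneg ?_ fun τ _ _ => supnn τ
          exact Finset.Icc_subset_Icc (by omega) (by omega)
      _ ≤ v := hΔ
  have hne₁ : (Finset.Icc s₁ e₁).Nonempty := Finset.nonempty_Icc.mpr h1
  have hne₂ : (Finset.Icc s₂ e₂).Nonempty := Finset.nonempty_Icc.mpr h2
  -- means of any fixed policy over the two intervals differ by ≤ v
  have mean : ∀ π' : P,
      |(∑ t ∈ Finset.Icc s₁ e₁, R t π') / ((Finset.Icc s₁ e₁).card : ℝ)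
        - (∑ t ∈ Finset.Icc s₂ e₂, R t π') / ((Finset.Icc s₂ e₂).card : ℝ)| ≤ v := by
    intro π'
    refine mean_abs_le hne₁ hne₂ (fun t => R t π') v ?_
    intro a ha b hb
    rw [Finset.mem_Icc] at ha hb
    exact point π' a b (by omega) (by omega) (by omega) (by omega)
  have sup_bd := sup'_abs_sub_le
    (fun π' => (∑ t ∈ Finset.Icc s₁ e₁, R t π') / ((Finset.Icc s₁ e₁).card : ℝ))
    (fun π' => (∑ t ∈ Finset.Icc s₂ e₂, R t π') / ((Finset.Icc s₂ e₂).card : ℝ)) v mean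
  have mπ := mean π
  set A₁ := Finset.univ.sup' Finset.univ_nonempty fun π' =>
    (∑ t ∈ Finset.Icc s₁ e₁, R t π') / ((Finset.Icc s₁ e₁).card : ℝ)
  set A₂ := Finset.univ.sup' Finset.univ_nonempty fun π' =>
    (∑ t ∈ Finset.Icc s₂ e₂, R t π') / ((Finset.Icc s₂ e₂).card : ℝ)
  have h1 := abs_le.mp sup_bd
  have h2 := abs_le.mp mπ
  rw [abs_le]
  constructor <;> [nlinarith [h1.1, h2.2]; nlinarith [h1.2, h2.1]]
end

section
/- Let positive reals e_1, …, e_m satisfy Σ_i e_i ≤ T and suppose each satisfies d_i ≥ c·e_i^{−γ/2} for constants c > 0 and γ ∈ (0,1), where d_i ≥ 0 and Σ_i d_i ≤ Δ. Then m ≤ c^{−2/(2+γ)} Δ^{2/(2+γ)} T^{γ/(2+γ)}. -/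
/-- Hölder argument bounding the number of drift-triggered epochs: if `Σ e i ≤ T`,
`d i ≥ c * (e i)^{-γ/2}` with `Σ d i ≤ Δ`, then
`m ≤ c^{-2/(2+γ)} Δ^{2/(2+γ)} T^{γ/(2+γ)}`. -/
theorem epoch_count_le_holder
    (m : ℕ) (e d : Fin m → ℝ)
    (he : ∀ i, 0 < e i) (hd : ∀ i, 0 ≤ d i)
    (c γ : ℝ) (hc : 0 < c) (hγ : γ ∈ Set.Ioo (0:ℝ) 1)
    (T Δ : ℝ) (hT : ∑ i, e i ≤ T) (hΔ : ∑ i, d i ≤ Δ)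
    (hlb : ∀ i, c * (e i) ^ (-(γ / 2)) ≤ d i) :
    (m : ℝ) ≤ c ^ (-(2 / (2 + γ))) * Δ ^ (2 / (2 + γ)) * T ^ (γ / (2 + γ)) := by
  obtain ⟨hγ0, hγ1⟩ := hγ
  have h2γ : (0:ℝ) < 2 + γ := by linarith
  have hT0 : 0 ≤ T := le_trans (Finset.sum_nonneg fun i _ => (he i).le) hT
  have hΔ0 : 0 ≤ Δ := le_trans (Finset.sum_nonneg fun i _ => hd i) hΔ
  set p : ℝ := (2 + γ) / 2 with hp
  set q : ℝ := (2 + γ) / γ with hq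
  have hpq : Real.HolderConjugate p q := by
    rw [Real.holderConjugate_iff]
    constructor
    · rw [hp, lt_div_iff₀ (by norm_num : (0:ℝ) < 2)]; linarith
    · rw [hp, hq]; field_simp
  set f : Fin m → ℝ := fun i => (e i) ^ (-(γ / (2 + γ))) with hf
  set g : Fin m → ℝ := fun i => (e i) ^ (γ / (2 + γ)) with hg
  have key := Real.inner_le_Lp_mul_Lq_of_nonneg (s := Finset.univ) (f := f) (g := g) hpq
    (fun i _ => (Real.rpow_pos_of_pos (he i) _).le)
    (fun i _ => (Real.rpow_pos_of_pos (he i) _).le)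
  have hfg : ∀ i : Fin m, f i * g i = 1 := by
    intro i
    rw [hf, hg]; simp only
    rw [← Real.rpow_add (he i)]
    simp
  have hfp : ∀ i : Fin m, f i ^ p = (e i) ^ (-(γ / 2)) := by
    intro i
    rw [hf]; simp only
    rw [← Real.rpow_mul (he i).le]
    congr 1
    rw [hp]; field_simp
  have hgq : ∀ i : Fin m, g i ^ q = e i := by
    intro i
    rw [hg]; simp only
    rw [← Real.rpow_mul (he i).le]
    rw [hq]
    rw [div_mul_div_comm, mul_comm γ (2 + γ), div_self (by positivity), Real.rpow_one]
  have h1p : 1 / p = 2 / (2 + γ) := by rw [hp, one_div_div]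
  have h1q : 1 / q = γ / (2 + γ) := by rw [hq, one_div_div]
  have hsum1 : ∑ i, (e i) ^ (-(γ / 2)) ≤ Δ / c := by
    rw [le_div_iff₀ hc, Finset.sum_mul]
    refine le_trans (Finset.sum_le_sum fun i _ => ?_) hΔ
    rw [mul_comm]; exact hlb i
  have hsum1nn : (0:ℝ) ≤ ∑ i, (e i) ^ (-(γ / 2)) :=
    Finset.sum_nonneg fun i _ => (Real.rpow_pos_of_pos (he i) _).le
  have hsum2nn : (0:ℝ) ≤ ∑ i, e i := Finset.sum_nonneg fun i _ => (he i).le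
  calc (m : ℝ) = ∑ i : Fin m, f i * g i := by simp [hfg]
    _ ≤ (∑ i, f i ^ p) ^ (1 / p) * (∑ i, g i ^ q) ^ (1 / q) := key
    _ = (∑ i, (e i) ^ (-(γ / 2))) ^ (2 / (2 + γ)) * (∑ i, e i) ^ (γ / (2 + γ)) := by
        rw [h1p, h1q]
        congr 1
        · congr 1; exact Finset.sum_congr rfl fun i _ => hfp i
        · congr 1; exact Finset.sum_congr rfl fun i _ => hgq i
    _ ≤ (Δ / c) ^ (2 / (2 + γ)) * T ^ (γ / (2 + γ)) := by
        apply mul_le_mul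
        · exact Real.rpow_le_rpow hsum1nn hsum1 (by positivity)
        · exact Real.rpow_le_rpow hsum2nn hT (by positivity)
        · exact Real.rpow_nonneg hsum2nn _
        · exact Real.rpow_nonneg (by positivity) _
    _ = c ^ (-(2 / (2 + γ))) * Δ ^ (2 / (2 + γ)) * T ^ (γ / (2 + γ)) := by
        rw [Real.div_rpow hΔ0 hc.le, Real.rpow_neg hc.le, div_eq_mul_inv]
        ring
end
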